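/- There exists a constant C > 0 (the spectral constant) such that for every ν ∈ (0,1], every k ∈ ℤ²\{0} with |k| = √(k₁²+k₂²), every θ_k ∈ 𝕋, and every η ∈ H¹(𝕋;ℂ): ν^{1/2}|k|^{1/2} ‖η‖²_{L²(𝕋)} ≤ ν ‖∂_θ η‖²_{L²(𝕋)} + C |k| ‖sin(θ − θ_k) η‖²_{L²(𝕋)}. -/

import Mathlib

open Real MeasureTheory intervalIntegral

set_option maxHeartbeats 1000000

/-- spectral (hypocoercivity) inequality: there is a universal constant
C such that ν^{1/2}|k|^{1/2}‖η‖² ≤ ν‖∂_θη‖² + C|k|‖sin(θ-θ_k)η‖². -/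
theorem spectral_inequality :
    ∃ C : ℝ, 0 < C ∧
      ∀ (ν : ℝ), ν ∈ Set.Ioc (0 : ℝ) 1 →
      ∀ (k : ℤ × ℤ), k ≠ 0 →
      ∀ (θk : ℝ) (η η' : ℝ → ℂ),
        (∀ θ, HasDerivAt η (η' θ) θ) →
        Continuous η' →
        Function.Periodic η (2 * π) →
        Real.sqrt ν * Real.sqrt (Real.sqrt ((k.1 : ℝ) ^ 2 + (k.2 : ℝ) ^ 2)) *
            (∫ θ in (-π)..π, ‖η θ‖ ^ 2)
          ≤ ν * (∫ θ in (-π)..π, ‖η' θ‖ ^ 2)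
            + C * Real.sqrt ((k.1 : ℝ) ^ 2 + (k.2 : ℝ) ^ 2) *
              (∫ θ in (-π)..π, (Real.sin (θ - θk)) ^ 2 * ‖η θ‖ ^ 2) := by
  refine ⟨3, by norm_num, ?_⟩
  rintro ν ⟨hν0, hν1⟩ k hk θk η η' hderiv hη'c hper
  have hπ : (-π : ℝ) ≤ π := by linarith [Real.pi_pos]
  set K : ℝ := Real.sqrt ((k.1 : ℝ) ^ 2 + (k.2 : ℝ) ^ 2) with hKdef
  -- K ≥ 1
  have hK1 : (1:ℝ) ≤ K := by
    have hor : k.1 ≠ 0 ∨ k.2 ≠ 0 := by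
      by_contra h
      push_neg at h
      exact hk (Prod.ext h.1 h.2)
    have h1 : (1:ℝ) ≤ (k.1 : ℝ) ^ 2 + (k.2 : ℝ) ^ 2 := by
      rcases hor with h | h
      · have h2 : (1:ℤ) ≤ k.1 ^ 2 := by rcases h.lt_or_gt with h'|h' <;> nlinarith
        have h3 : (1:ℝ) ≤ (k.1 : ℝ)^2 := by exact_mod_cast h2
        nlinarith [sq_nonneg ((k.2:ℝ))]
      · have h2 : (1:ℤ) ≤ k.2 ^ 2 := by rcases h.lt_or_gt with h'|h' <;> nlinarith
        have h3 : (1:ℝ) ≤ (k.2 : ℝ)^2 := by exact_mod_cast h2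
        nlinarith [sq_nonneg ((k.1:ℝ))]
    have h2 := Real.sqrt_le_sqrt h1
    rwa [Real.sqrt_one] at h2
  have hK0 : (0:ℝ) < K := by linarith
  have hηc : Continuous η :=
    continuous_iff_continuousAt.mpr fun θ => (hderiv θ).continuousAt
  have hnormsq : ∀ z : ℂ, ‖z‖ ^ 2 = z.re ^ 2 + z.im ^ 2 := by
    intro z
    rw [Complex.sq_norm, Complex.normSq_apply]
    ring
  set f' : ℝ → ℝ := fun θ =>
    2 * ((η θ).re * (η' θ).re) + 2 * ((η θ).im * (η' θ).im) with hf'def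
  have hf : ∀ θ, HasDerivAt (fun t => ‖η t‖ ^ 2) (f' θ) θ := by
    intro θ
    have hre : HasDerivAt (fun t => (η t).re) ((η' θ).re) θ :=
      Complex.reCLM.hasFDerivAt.comp_hasDerivAt θ (hderiv θ)
    have him : HasDerivAt (fun t => (η t).im) ((η' θ).im) θ :=
      Complex.imCLM.hasFDerivAt.comp_hasDerivAt θ (hderiv θ)
    have h1 := (hre.mul hre).add (him.mul him)
    have heq : (fun t => ‖η t‖ ^ 2)
        = fun t => (η t).re * (η t).re + (η t).im * (η t).im :=
      funext fun t => by rw [hnormsq]; ring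
    rw [heq]
    exact h1.congr_deriv (by simp only [hf'def]; ring)
  have hf'c : Continuous f' := by
    apply Continuous.add
    · exact continuous_const.mul
        ((Complex.continuous_re.comp hηc).mul (Complex.continuous_re.comp hη'c))
    · exact continuous_const.mul
        ((Complex.continuous_im.comp hηc).mul (Complex.continuous_im.comp hη'c))
  set φ : ℝ → ℝ := fun θ => Real.sin (2 * (θ - θk)) / 2 with hφdef
  have hφ : ∀ θ, HasDerivAt φ (Real.cos (2 * (θ - θk))) θ := by
    intro θ
    have h1 : HasDerivAt (fun t : ℝ => 2 * (t - θk)) 2 θ := by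
      simpa using ((hasDerivAt_id θ).sub_const θk).const_mul 2
    have h2 := (Real.hasDerivAt_sin (2 * (θ - θk))).comp θ h1
    have h3 := h2.div_const 2
    exact h3.congr_deriv (by ring)
  have hφc : Continuous φ :=
    (Real.continuous_sin.comp (by continuity)).div_const 2
  have hfc : Continuous fun θ => ‖η θ‖ ^ 2 := hηc.norm.pow 2
  have hcos2c : Continuous fun θ => Real.cos (2 * (θ - θk)) :=
    Real.continuous_cos.comp (by continuity)
  -- integration by parts
  have ibp := intervalIntegral.integral_mul_deriv_eq_deriv_mul
    (a := -π) (b := π)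
    (u := φ) (u' := fun θ => Real.cos (2 * (θ - θk)))
    (v := fun θ => ‖η θ‖ ^ 2) (v' := f')
    (fun x _ => hφ x) (fun x _ => hf x)
    (hcos2c.intervalIntegrable (-π) π) (hf'c.intervalIntegrable (-π) π)
  have hηp : η π = η (-π) := by
    have h := hper (-π)
    rw [show -π + 2 * π = π by ring] at h
    exact h
  have hφp : φ π = φ (-π) := by
    simp only [hφdef]
    rw [show 2 * (π - θk) = -(2 * θk) + 2 * π by ring,
        show 2 * (-π - θk) = -(2 * θk) - 2 * π by ring,
        Real.sin_add_two_pi, Real.sin_sub_two_pi]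
  have hI : (∫ x in (-π)..π, Real.cos (2 * (x - θk)) * ‖η x‖ ^ 2)
      = -∫ x in (-π)..π, φ x * f' x := by
    rw [ibp]
    simp only [hηp, hφp]
    ring
  -- integrability facts
  have hint_f : IntervalIntegrable (fun θ => ‖η θ‖ ^ 2) volume (-π) π :=
    hfc.intervalIntegrable _ _
  have hsinc : Continuous fun θ => Real.sin (θ - θk) :=
    Real.continuous_sin.comp (by continuity)
  have hint_s2f : IntervalIntegrable
      (fun θ => Real.sin (θ - θk) ^ 2 * ‖η θ‖ ^ 2) volume (-π) π :=
    ((hsinc.pow 2).mul hfc).intervalIntegrable _ _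
  have hint_B : IntervalIntegrable (fun θ => ‖η' θ‖ ^ 2) volume (-π) π :=
    (hη'c.norm.pow 2).intervalIntegrable _ _
  have hint_φf' : IntervalIntegrable (fun θ => -(φ θ * f' θ)) volume (-π) π :=
    ((hφc.mul hf'c).neg).intervalIntegrable _ _
  -- split cos(2x) = 1 - 2 sin²
  have hsplit : (∫ x in (-π)..π, Real.cos (2 * (x - θk)) * ‖η x‖ ^ 2)
      = (∫ θ in (-π)..π, ‖η θ‖ ^ 2)
        - 2 * ∫ θ in (-π)..π, Real.sin (θ - θk) ^ 2 * ‖η θ‖ ^ 2 := by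
    rw [← intervalIntegral.integral_const_mul,
        ← intervalIntegral.integral_sub hint_f (hint_s2f.const_mul 2)]
    apply intervalIntegral.integral_congr
    intro θ _
    have hc2 : Real.cos (2 * (θ - θk)) = 2 * Real.cos (θ - θk) ^ 2 - 1 :=
      Real.cos_two_mul _
    have hp := Real.sin_sq_add_cos_sq (θ - θk)
    simp only
    nlinarith [sq_nonneg (‖η θ‖)]
  -- set up t and pointwise bound
  set sν : ℝ := Real.sqrt ν with hsνdef
  set sqK : ℝ := Real.sqrt K with hsqKdef
  have hsνpos : 0 < sν := Real.sqrt_pos.mpr hν0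
  have hsν1 : sν ≤ 1 := Real.sqrt_le_one.mpr hν1
  have hsνsq : sν * sν = ν := Real.mul_self_sqrt hν0.le
  have hsqKpos : 0 < sqK := Real.sqrt_pos.mpr hK0
  have hsqKsq : sqK * sqK = K := Real.mul_self_sqrt hK0.le
  have hsqK1 : 1 ≤ sqK := by
    have := Real.sqrt_le_sqrt hK1
    simpa [hsqKdef] using this
  have hsqKleK : sqK ≤ K := by nlinarith
  set t : ℝ := sν / sqK with htdef
  have ht : 0 < t := div_pos hsνpos hsqKpos
  have hpt : ∀ θ ∈ Set.Icc (-π) π,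
      -(φ θ * f' θ) ≤ Real.sin (θ - θk) ^ 2 * ‖η θ‖ ^ 2 / t + t * ‖η' θ‖ ^ 2 := by
    intro θ _
    have hphi : φ θ = Real.sin (θ - θk) * Real.cos (θ - θk) := by
      simp only [hφdef]
      rw [Real.sin_two_mul]
      ring
    have h1 : (-(φ θ * f' θ)) * t
        ≤ Real.sin (θ - θk) ^ 2 * ‖η θ‖ ^ 2 + t ^ 2 * ‖η' θ‖ ^ 2 := by
      rw [hphi, hnormsq (η θ), hnormsq (η' θ)]
      simp only [hf'def]
      have hco : Real.cos (θ - θk) ^ 2 ≤ 1 := Real.cos_sq_le_one (θ - θk)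
      have h3 : t ^ 2 * ((η' θ).re ^ 2 + (η' θ).im ^ 2) * Real.cos (θ - θk) ^ 2
          ≤ t ^ 2 * ((η' θ).re ^ 2 + (η' θ).im ^ 2) := by
        nlinarith [sq_nonneg t, sq_nonneg (η' θ).re, sq_nonneg (η' θ).im,
          mul_nonneg (sq_nonneg t) (add_nonneg (sq_nonneg (η' θ).re) (sq_nonneg (η' θ).im))]
      nlinarith [sq_nonneg (Real.sin (θ - θk) * (η θ).re + t * Real.cos (θ - θk) * (η' θ).re),
        sq_nonneg (Real.sin (θ - θk) * (η θ).im + t * Real.cos (θ - θk) * (η' θ).im)]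
    calc -(φ θ * f' θ) = ((-(φ θ * f' θ)) * t) / t := by field_simp
      _ ≤ (Real.sin (θ - θk) ^ 2 * ‖η θ‖ ^ 2 + t ^ 2 * ‖η' θ‖ ^ 2) / t :=
          (div_le_div_iff_of_pos_right ht).mpr h1
      _ = Real.sin (θ - θk) ^ 2 * ‖η θ‖ ^ 2 / t + t * ‖η' θ‖ ^ 2 := by
          field_simp
  have hint_rhs : IntervalIntegrable
      (fun θ => Real.sin (θ - θk) ^ 2 * ‖η θ‖ ^ 2 / t + t * ‖η' θ‖ ^ 2) volume (-π) π :=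
    ((((hsinc.pow 2).mul hfc).div_const t).add
      (continuous_const.mul (hη'c.norm.pow 2))).intervalIntegrable _ _
  have hmono := intervalIntegral.integral_mono_on hπ hint_φf' hint_rhs hpt
  rw [intervalIntegral.integral_neg,
      intervalIntegral.integral_add (hint_s2f.div_const t) (hint_B.const_mul t),
      intervalIntegral.integral_div, intervalIntegral.integral_const_mul] at hmono
  -- abbreviations
  set A : ℝ := ∫ θ in (-π)..π, ‖η θ‖ ^ 2 with hAdef
  set B : ℝ := ∫ θ in (-π)..π, ‖η' θ‖ ^ 2 with hBdef
  set S : ℝ := ∫ θ in (-π)..π, Real.sin (θ - θk) ^ 2 * ‖η θ‖ ^ 2 with hSdef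
  have hS0 : 0 ≤ S :=
    intervalIntegral.integral_nonneg hπ (fun x _ => by positivity)
  have hAle : A ≤ 2 * S + S / t + t * B := by
    have h1 : A - 2 * S = -∫ x in (-π)..π, φ x * f' x := by
      rw [← hI, hsplit]
    linarith [hmono, h1.ge, h1.le]
  -- final assembly
  have hmul := mul_le_mul_of_nonneg_left hAle
    (show (0:ℝ) ≤ sν * sqK by positivity)
  have e1 : sν * sqK * (S / t) = K * S := by
    rw [htdef]
    field_simp
    linear_combination S * hsqKsq
  have e2 : sν * sqK * (t * B) = ν * B := by
    rw [htdef]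
    field_simp
    linear_combination B * hsνsq
  have e3 : sν * sqK ≤ K := by nlinarith
  have expand : sν * sqK * (2 * S + S / t + t * B)
      = 2 * (sν * sqK) * S + sν * sqK * (S / t) + sν * sqK * (t * B) := by ring
  rw [expand, e1, e2] at hmul
  have e4 : 2 * (sν * sqK) * S ≤ 2 * K * S := by nlinarith
  linarith
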